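/- Suppose φ satisfies the stated assumption. Then there exists a constant θ₁ > 0 (depending only on A, β, φ and the vectors G_i, but not on the minimizer) such that for every local minimizer x* of F with q = 1 and every i ∈ J, either G_iᵀ x* = 0 or |G_iᵀ x*| ≥ θ₁. (The paper proves this for all stationary points of F, a class which includes all local minimizers.) -/

import Mathlib

/-- The dot product `gᵀ x` of two vectors in `ℝ^N`. -/
noncomputable def dotp {N : ℕ} (g x : Fin N → ℝ) : ℝ := ∑ l, g l * x l

/-- The Euclidean norm `‖x‖₂` on `ℝ^N`. -/
noncomputable def norm2 {N : ℕ} (x : Fin N → ℝ) : ℝ := Real.sqrt (∑ l, (x l) ^ 2)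

/-- Assumptions on the potential function `φ` (with derivative `φ'` on `(0,∞)`):
continuous, concave and coercive on `[0,∞)` with `φ(0) = 0`; continuously
differentiable on `(0,∞)` with positive derivative there, `φ'(0⁺) = +∞`, and
`φ'` Lipschitz on every `[α,∞)` with `α > 0`. -/
structure PhiAssumption (φ φ' : ℝ → ℝ) : Prop where
  nonneg : ∀ t : ℝ, 0 ≤ t → 0 ≤ φ t
  zero : φ 0 = 0
  cont : ContinuousOn φ (Set.Ici 0)
  concave : ConcaveOn ℝ (Set.Ici 0) φ
  coercive : Filter.Tendsto φ Filter.atTop Filter.atTop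
  hasDeriv : ∀ t : ℝ, 0 < t → HasDerivAt φ (φ' t) t
  derivCont : ContinuousOn φ' (Set.Ioi 0)
  derivPos : ∀ t : ℝ, 0 < t → 0 < φ' t
  derivAtZero : Filter.Tendsto φ' (nhdsWithin 0 (Set.Ioi 0)) Filter.atTop
  derivLip : ∀ α : ℝ, 0 < α → ∃ L : ℝ, ∀ s : ℝ, α ≤ s → ∀ t : ℝ, α ≤ t →
    |φ' s - φ' t| ≤ L * |s - t|


/-- The objective function with `ℓ₁` fidelity (`q = 1`):
`F(x) = Σ_{i∈J} φ(|G_iᵀ x|) + β ‖Ax − b‖₁`. -/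
noncomputable def objF1 {M N : ℕ} {ι : Type} [Fintype ι] (φ : ℝ → ℝ)
    (A : Matrix (Fin M) (Fin N) ℝ) (b : Fin M → ℝ) (G : ι → Fin N → ℝ)
    (β : ℝ) (x : Fin N → ℝ) : ℝ :=
  (∑ i : ι, φ |dotp (G i) x|) + β * ∑ l, |A.mulVec x l - b l|

open scoped Classical

lemma dotp_sub_smul {N : ℕ} (g x w : Fin N → ℝ) (s : ℝ) :
    dotp g (x - s • w) = dotp g x - s * dotp g w := by
  simp only [dotp, Pi.sub_apply, Pi.smul_apply, smul_eq_mul, Finset.mul_sum,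
    ← Finset.sum_sub_distrib]
  exact Finset.sum_congr rfl fun l _ => by ring

lemma norm2_neg_smul {N : ℕ} (s : ℝ) (hs : 0 ≤ s) (w : Fin N → ℝ) :
    norm2 (-(s • w)) = s * norm2 w := by
  unfold norm2
  have h : (∑ l, ((-(s • w)) l) ^ 2) = s ^ 2 * ∑ l, (w l) ^ 2 := by
    rw [Finset.mul_sum]
    exact Finset.sum_congr rfl fun l _ => by
      simp only [Pi.neg_apply, Pi.smul_apply, smul_eq_mul]; ring
  rw [h, Real.sqrt_mul (sq_nonneg s), Real.sqrt_sq hs]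

def Realz {N : ℕ} {ι : Type} (G : ι → Fin N → ℝ) (σ : ι → SignType) : Prop :=
  ∃ w : Fin N → ℝ, ∀ j, (σ j = 0 → dotp (G j) w = 0) ∧ (σ j = 1 → 0 < dotp (G j) w) ∧
    (σ j = -1 → dotp (G j) w < 0)

noncomputable def wit {N : ℕ} {ι : Type} (G : ι → Fin N → ℝ) (σ : ι → SignType) :
    Fin N → ℝ :=
  if h : Realz G σ then h.choose else 0

lemma wit_spec {N : ℕ} {ι : Type} {G : ι → Fin N → ℝ} {σ : ι → SignType}
    (h : Realz G σ) : ∀ j, (σ j = 0 → dotp (G j) (wit G σ) = 0) ∧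
      (σ j = 1 → 0 < dotp (G j) (wit G σ)) ∧ (σ j = -1 → dotp (G j) (wit G σ) < 0) := by
  unfold wit; rw [dif_pos h]; exact h.choose_spec

noncomputable def Bc {M N : ℕ} {ι : Type} [Fintype ι] (A : Matrix (Fin M) (Fin N) ℝ)
    (G : ι → Fin N → ℝ) (β : ℝ) (σ : ι → SignType) (i : ι) : ℝ :=
  if Realz G σ ∧ σ i ≠ 0 then
    (β * ∑ l, |A.mulVec (wit G σ) l|) / |dotp (G i) (wit G σ)| else 0

noncomputable def C0 {M N : ℕ} {ι : Type} [Fintype ι] (A : Matrix (Fin M) (Fin N) ℝ)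
    (G : ι → Fin N → ℝ) (β : ℝ) : ℝ :=
  ∑ σ : ι → SignType, ∑ i, max 0 (Bc A G β σ i)

lemma Bc_le_C0 {M N : ℕ} {ι : Type} [Fintype ι] (A : Matrix (Fin M) (Fin N) ℝ)
    (G : ι → Fin N → ℝ) (β : ℝ) (σ : ι → SignType) (i : ι) :
    Bc A G β σ i ≤ C0 A G β := by
  calc Bc A G β σ i ≤ max 0 (Bc A G β σ i) := le_max_right _ _
    _ ≤ ∑ i', max 0 (Bc A G β σ i') := by
        have h0 : ∀ i' ∈ (Finset.univ : Finset ι), (0:ℝ) ≤ max 0 (Bc A G β σ i') :=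
          fun _ _ => le_max_left 0 _
        exact Finset.single_le_sum h0 (Finset.mem_univ i)
    _ ≤ C0 A G β := by
        have h1 : ∀ σ' ∈ (Finset.univ : Finset (ι → SignType)),
            (0:ℝ) ≤ ∑ i', max 0 (Bc A G β σ' i') :=
          fun _ _ => Finset.sum_nonneg fun _ _ => le_max_left 0 _
        exact Finset.single_le_sum h1 (Finset.mem_univ σ)

/-- lower bound theory for the `ℓ₁`-fidelity model. Under the
assumptions on `φ`, there is a constant `θ₁ > 0`, independent of the
minimizer, such that every local minimizer `x*` of `F` (with `q = 1`)
satisfies, for every `i ∈ J`, either `G_iᵀ x* = 0` or `|G_iᵀ x*| ≥ θ₁`. -/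
theorem lower_bound_l1_fidelity {M N : ℕ} (hM : 0 < M) (hN : 0 < N)
    {ι : Type} [Fintype ι]
    (A : Matrix (Fin M) (Fin N) ℝ) (b : Fin M → ℝ) (G : ι → Fin N → ℝ)
    (β : ℝ) (hβ : 0 < β)
    (φ φ' : ℝ → ℝ) (hφ : PhiAssumption φ φ') :
    ∃ θ₁ > (0 : ℝ), ∀ xs : Fin N → ℝ,
      (∃ ε > (0 : ℝ), ∀ x : Fin N → ℝ, norm2 (x - xs) < ε →
        objF1 φ A b G β xs ≤ objF1 φ A b G β x) →
      ∀ i : ι, dotp (G i) xs = 0 ∨ θ₁ ≤ |dotp (G i) xs| := by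
  classical
  have mono : MonotoneOn φ (Set.Ici 0) := by
    refine (strictMonoOn_of_deriv_pos (convex_Ici 0) hφ.cont ?_).monotoneOn
    intro t ht
    rw [interior_Ici] at ht
    rw [(hφ.hasDeriv t ht).deriv]
    exact hφ.derivPos t ht
  have hev : ∀ᶠ t in nhdsWithin 0 (Set.Ioi 0), C0 A G β + 1 ≤ φ' t :=
    hφ.derivAtZero.eventually_ge_atTop _
  rw [Filter.eventually_iff, mem_nhdsGT_iff_exists_Ioo_subset] at hev
  obtain ⟨θ₁, hθ₁mem, hsub⟩ := hev
  refine ⟨θ₁, hθ₁mem, ?_⟩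
  intro xs hloc i
  obtain ⟨ε, hε, hmin⟩ := hloc
  by_cases h0 : dotp (G i) xs = 0
  · exact Or.inl h0
  refine Or.inr ?_
  by_contra hcon
  push_neg at hcon
  have hai : 0 < |dotp (G i) xs| := abs_pos.mpr h0
  have hC1 : C0 A G β + 1 ≤ φ' |dotp (G i) xs| := hsub ⟨hai, hcon⟩
  set σ : ι → SignType := fun j => SignType.sign (dotp (G j) xs) with hσdef
  have hσval : ∀ j, σ j = SignType.sign (dotp (G j) xs) := fun j => by rw [hσdef]
  have hR : Realz G σ := by
    refine ⟨xs, fun j => ?_⟩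
    rw [hσval j]
    exact ⟨fun h => sign_eq_zero_iff.mp h, fun h => sign_eq_one_iff.mp h,
      fun h => sign_eq_neg_one_iff.mp h⟩
  have hσi : σ i ≠ 0 := by
    rw [hσval i]
    exact fun h => h0 (sign_eq_zero_iff.mp h)
  set w : Fin N → ℝ := wit G σ with hwdef
  have hws := wit_spec hR
  have hw : ∀ j, (dotp (G j) xs = 0 → dotp (G j) w = 0) ∧
      (0 < dotp (G j) xs → 0 < dotp (G j) w) ∧
      (dotp (G j) xs < 0 → dotp (G j) w < 0) := by
    intro j
    obtain ⟨hz, hp, hn⟩ := hws j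
    refine ⟨fun h => hz ?_, fun h => hp ?_, fun h => hn ?_⟩
    · rw [hσval j, h]; exact sign_zero
    · rw [hσval j]; exact sign_eq_one_iff.mpr h
    · rw [hσval j]; exact sign_eq_neg_one_iff.mpr h
  have hbi : 0 < |dotp (G i) w| := by
    rcases lt_or_gt_of_ne h0 with h | h
    · exact abs_pos.mpr (ne_of_lt ((hw i).2.2 h))
    · exact abs_pos.mpr (ne_of_gt ((hw i).2.1 h))
  set D : ℝ := ∑ l, |A.mulVec w l| with hDdef
  have hD0 : 0 ≤ D := Finset.sum_nonneg fun _ _ => abs_nonneg _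
  have hne : (Finset.univ : Finset ι).Nonempty := ⟨i, Finset.mem_univ i⟩
  set f : ι → ℝ :=
    fun j => if dotp (G j) xs = 0 then 1 else |dotp (G j) xs| / |dotp (G j) w|
    with hfdef
  have hcne : ∀ j, dotp (G j) xs ≠ 0 → dotp (G j) w ≠ 0 := by
    intro j hj
    rcases lt_or_gt_of_ne hj with h | h
    · exact ne_of_lt ((hw j).2.2 h)
    · exact ne_of_gt ((hw j).2.1 h)
  set δ₁ : ℝ := Finset.univ.inf' hne f with hδ₁def
  have hδ₁pos : 0 < δ₁ := by
    rw [hδ₁def, Finset.lt_inf'_iff]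
    intro j _
    rw [hfdef]
    by_cases hj : dotp (G j) xs = 0
    · simp [hj]
    · simp only [if_neg hj]
      exact div_pos (abs_pos.mpr hj) (abs_pos.mpr (hcne j hj))
  have hn2w : 0 ≤ norm2 w := Real.sqrt_nonneg _
  set δ : ℝ := min δ₁ (ε / (norm2 w + 1)) with hδdef
  have hδpos : 0 < δ := lt_min hδ₁pos (div_pos hε (by linarith))
  have hjb : ∀ s, 0 < s → s < δ₁ → ∀ j, dotp (G j) xs ≠ 0 →
      s * |dotp (G j) w| < |dotp (G j) xs| := by
    intro s hs0 hsδ₁ j hj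
    have h1 : δ₁ ≤ f j := by rw [hδ₁def]; exact Finset.inf'_le f (Finset.mem_univ j)
    have h2 : f j = |dotp (G j) xs| / |dotp (G j) w| := by rw [hfdef]; simp only [if_neg hj]
    have h3 : s < |dotp (G j) xs| / |dotp (G j) w| := by
      rw [← h2]; exact lt_of_lt_of_le hsδ₁ h1
    rwa [lt_div_iff₀ (abs_pos.mpr (hcne j hj))] at h3
  have key : ∀ s ∈ Set.Ioo (0:ℝ) δ,
      φ |dotp (G i) xs| - φ (|dotp (G i) xs| - s * |dotp (G i) w|) ≤ s * (β * D) := by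
    intro s hs
    have hs0 : 0 < s := hs.1
    have hsδ₁ : s < δ₁ := lt_of_lt_of_le hs.2 (min_le_left _ _)
    have hsε : s < ε / (norm2 w + 1) := lt_of_lt_of_le hs.2 (min_le_right _ _)
    have habs : ∀ j, |dotp (G j) (xs - s • w)| =
        |dotp (G j) xs| - s * |dotp (G j) w| := by
      intro j
      rw [dotp_sub_smul]
      rcases lt_trichotomy (dotp (G j) xs) 0 with h | h | h
      · have hcw := (hw j).2.2 h
        have hlt := hjb s hs0 hsδ₁ j (ne_of_lt h)
        rw [abs_of_neg h, abs_of_neg hcw] at hlt ⊢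
        have hneg : dotp (G j) xs - s * dotp (G j) w < 0 := by nlinarith
        rw [abs_of_neg hneg]; ring
      · have hcw := (hw j).1 h
        simp [h, hcw]
      · have hcw := (hw j).2.1 h
        have hlt := hjb s hs0 hsδ₁ j (ne_of_gt h)
        rw [abs_of_pos h, abs_of_pos hcw] at hlt ⊢
        have hpos : 0 < dotp (G j) xs - s * dotp (G j) w := by nlinarith
        rw [abs_of_pos hpos]
    have hnear : norm2 ((xs - s • w) - xs) < ε := by
      have he : (xs - s • w) - xs = -(s • w) := by
        ext l; simp [Pi.sub_apply]
      rw [he, norm2_neg_smul s hs0.le w]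
      have h4 : s * (norm2 w + 1) < ε := (lt_div_iff₀ (by linarith)).mp hsε
      nlinarith
    have hminle := hmin _ hnear
    unfold objF1 at hminle
    have hfid : ∑ l, |A.mulVec (xs - s • w) l - b l| ≤
        (∑ l, |A.mulVec xs l - b l|) + s * D := by
      rw [hDdef, Finset.mul_sum, ← Finset.sum_add_distrib]
      apply Finset.sum_le_sum
      intro l _
      have hAl : A.mulVec (xs - s • w) l = A.mulVec xs l - s * A.mulVec w l := by
        rw [Matrix.mulVec_sub, Matrix.mulVec_smul]
        simp
      rw [hAl]
      have h5 : |A.mulVec xs l - s * A.mulVec w l - b l| =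
          |(A.mulVec xs l - b l) - s * A.mulVec w l| := by ring_nf
      rw [h5]
      calc |(A.mulVec xs l - b l) - s * A.mulVec w l| ≤
          |A.mulVec xs l - b l| + |s * A.mulVec w l| := abs_sub _ _
        _ = |A.mulVec xs l - b l| + s * |A.mulVec w l| := by
            rw [abs_mul, abs_of_pos hs0]
    have hreg : (∑ j, φ |dotp (G j) (xs - s • w)|) =
        ∑ j, φ (|dotp (G j) xs| - s * |dotp (G j) w|) :=
      Finset.sum_congr rfl fun j _ => by rw [habs j]
    rw [hreg] at hminle
    have h2 : β * (∑ l, |A.mulVec (xs - s • w) l - b l|) ≤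
        β * ((∑ l, |A.mulVec xs l - b l|) + s * D) :=
      mul_le_mul_of_nonneg_left hfid hβ.le
    have h2' : β * ((∑ l, |A.mulVec xs l - b l|) + s * D) =
        β * (∑ l, |A.mulVec xs l - b l|) + s * (β * D) := by ring
    have hsum : (∑ j, φ |dotp (G j) xs|) ≤
        (∑ j, φ (|dotp (G j) xs| - s * |dotp (G j) w|)) + s * (β * D) := by
      linarith
    have hterm : ∀ j ∈ (Finset.univ : Finset ι),
        0 ≤ φ |dotp (G j) xs| - φ (|dotp (G j) xs| - s * |dotp (G j) w|) := by
      intro j _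
      by_cases hj : dotp (G j) xs = 0
      · have hcw := (hw j).1 hj
        simp [hj, hcw]
      · have hlt := hjb s hs0 hsδ₁ j hj
        have h6 : 0 ≤ |dotp (G j) xs| - s * |dotp (G j) w| := by linarith
        have h7 : |dotp (G j) xs| - s * |dotp (G j) w| ≤ |dotp (G j) xs| := by
          have := mul_nonneg hs0.le (abs_nonneg (dotp (G j) w))
          linarith
        have := mono (Set.mem_Ici.mpr h6) (Set.mem_Ici.mpr (abs_nonneg _)) h7
        linarith
    have hsingle := Finset.single_le_sum hterm (Finset.mem_univ i)
    have hsd : ∑ j, (φ |dotp (G j) xs| - φ (|dotp (G j) xs| - s * |dotp (G j) w|)) ≤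
        s * (β * D) := by
      rw [Finset.sum_sub_distrib]
      linarith
    linarith
  -- derivative step
  set a := |dotp (G i) xs| with hadef
  set bi := |dotp (G i) w| with hbidef
  have hinner : HasDerivAt (fun s : ℝ => a - s * bi) (-bi) 0 := by
    simpa using ((hasDerivAt_id (0:ℝ)).mul_const bi).const_sub a
  have houter : HasDerivAt φ (φ' a) ((fun s : ℝ => a - s * bi) 0) := by
    simpa using hφ.hasDeriv a hai
  have hder : HasDerivAt (fun s : ℝ => φ (a - s * bi)) (φ' a * -bi) 0 := by
    have := houter.comp 0 hinner
    exact this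
  have hslope : Filter.Tendsto (slope (fun s : ℝ => φ (a - s * bi)) 0)
      (nhdsWithin 0 (Set.Ioi 0)) (nhds (φ' a * -bi)) :=
    (hasDerivAt_iff_tendsto_slope.mp hder).mono_left
      (nhdsWithin_mono 0 (fun s hs => Set.mem_compl_singleton_iff.mpr (ne_of_gt hs)))
  have hev2 : ∀ᶠ s in nhdsWithin 0 (Set.Ioi 0),
      -(β * D) ≤ slope (fun s : ℝ => φ (a - s * bi)) 0 s := by
    filter_upwards [Ioo_mem_nhdsGT_of_mem (Set.mem_Ico.mpr ⟨le_refl 0, hδpos⟩)] with s hs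
    have hk := key s hs
    rw [slope_def_field]
    rw [sub_zero, le_div_iff₀ hs.1]
    have h8 : (0:ℝ) - 0 * bi = 0 := by ring
    have h9 : φ (a - 0 * bi) = φ a := by norm_num
    rw [h9]
    nlinarith
  have hge : -(β * D) ≤ φ' a * -bi := ge_of_tendsto hslope hev2
  have hfin : φ' a ≤ β * D / bi := by
    rw [le_div_iff₀ hbi]
    nlinarith
  have hBc : Bc A G β σ i = β * D / bi := by
    unfold Bc
    rw [if_pos ⟨hR, hσi⟩, ← hwdef, ← hDdef, hbidef]
  have hle := Bc_le_C0 A G β σ i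
  rw [hBc] at hle
  linarith
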